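/- Let m ∈ ℝ, σ > 0, 0 ≤ a < b, Δq > 0. Let φ(x) = exp(−x²/2)/√(2π) and Φ(x) = ∫_{−∞}^x φ(u) du, set α = (a−m)/σ and β = (b−m)/σ, and let f_{N^T}(ε) = φ((ε−m)/σ)/(σ·(Φ(β)−Φ(α))) for ε ∈ [a,b] and 0 otherwise be the truncated Gaussian density. Let g(x) = ∫_a^b f_{N^T}(ε)·(ε/2)·exp(−ε·|x|) dε be the corresponding mixture Laplace density. Then the mechanism is ε₀-differentially private with ε₀ = ln[ ( m + σ·(φ(α) − φ(β))/(Φ(β) − Φ(α)) ) / ( ∫_a^b ε·exp(−ε·Δq)·f_{N^T}(ε) dε ) ]: for every measurable set S ⊆ ℝ and all a₁, a₂ ∈ ℝ with |a₁ − a₂| ≤ Δq, ∫_S g(x − a₁) dx ≤ exp(ε₀) · ∫_S g(x − a₂) dx. -/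

import Mathlib

open MeasureTheory Real

/-- Standard Gaussian density. -/
noncomputable def gaussPdf (x : ℝ) : ℝ := Real.exp (-x ^ 2 / 2) / Real.sqrt (2 * Real.pi)

/-- Standard Gaussian cumulative distribution function. -/
noncomputable def gaussCdf (x : ℝ) : ℝ := ∫ u in Set.Iic x, gaussPdf u

/-- The Randomized DP Laplace mechanism whose reciprocal scale is distributed according
to the Gaussian `N(m, σ²)` truncated to `[a, b]` satisfies `ε₀`-differential privacy with
`ε₀ = ln[ (m + σ(φ(α) − φ(β))/(Φ(β) − Φ(α))) / M′_{N^T}(−Δq) ]`, where `α = (a−m)/σ`,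
`β = (b−m)/σ`, and `M′_{N^T}(−Δq) = ∫ ε·exp(−εΔq)·f_{N^T}(ε) dε`. -/
lemma gaussPdf_pos (x : ℝ) : 0 < gaussPdf x :=
  div_pos (Real.exp_pos _) (Real.sqrt_pos.2 (by positivity))

lemma continuous_gaussPdf : Continuous gaussPdf := by
  unfold gaussPdf; fun_prop

lemma integrable_gaussPdf : Integrable gaussPdf := by
  have h := (integrable_exp_neg_mul_sq (show (0:ℝ) < 1/2 by norm_num)).div_const
    (Real.sqrt (2 * Real.pi))
  refine h.congr (Filter.Eventually.of_forall fun x => ?_)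
  unfold gaussPdf; ring_nf

lemma intervalIntegral_gaussPdf (α β : ℝ) :
    ∫ u in α..β, gaussPdf u = gaussCdf β - gaussCdf α := by
  rw [gaussCdf, gaussCdf, intervalIntegral.integral_Iic_sub_Iic
    integrable_gaussPdf.integrableOn integrable_gaussPdf.integrableOn]

lemma hasDerivAt_neg_gaussPdf (x : ℝ) :
    HasDerivAt (fun y => -gaussPdf y) (x * gaussPdf x) x := by
  have h1 : HasDerivAt (fun y : ℝ => -y ^ 2 / 2) (-x) x := by
    have := ((hasDerivAt_pow 2 x).neg).div_const 2
    simpa using this.congr_deriv (by ring)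
  have h2 : HasDerivAt (fun y : ℝ => Real.exp (-y ^ 2 / 2)) (Real.exp (-x ^ 2 / 2) * (-x)) x :=
    (Real.hasDerivAt_exp _).comp x h1
  have h3 := (h2.div_const (Real.sqrt (2 * Real.pi))).neg
  refine h3.congr_deriv ?_
  unfold gaussPdf; ring

lemma intervalIntegral_mul_gaussPdf (α β : ℝ) :
    ∫ u in α..β, u * gaussPdf u = gaussPdf α - gaussPdf β := by
  have := intervalIntegral.integral_eq_sub_of_hasDerivAt
    (f := fun y => -gaussPdf y) (f' := fun y => y * gaussPdf y)
    (fun x _ => hasDerivAt_neg_gaussPdf x)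
    ((continuous_id.mul continuous_gaussPdf).intervalIntegrable α β)
  rw [this]; ring

lemma gaussCdf_lt {α β : ℝ} (h : α < β) : gaussCdf α < gaussCdf β := by
  have := intervalIntegral.intervalIntegral_pos_of_pos_on
    (f := gaussPdf) (continuous_gaussPdf.intervalIntegrable α β)
    (fun x _ => gaussPdf_pos x) h
  rw [intervalIntegral_gaussPdf] at this
  linarith

theorem truncated_gaussian_mixture_laplace_dp
    (m σ a b Δq : ℝ) (hσ : 0 < σ) (ha : 0 ≤ a) (hab : a < b) (hΔq : 0 < Δq)
    (α β : ℝ) (hα : α = (a - m) / σ) (hβ : β = (b - m) / σ)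
    (fNT : ℝ → ℝ)
    (hfNT : ∀ ε : ℝ, fNT ε = if ε ∈ Set.Icc a b then
      gaussPdf ((ε - m) / σ) / (σ * (gaussCdf β - gaussCdf α)) else 0)
    (g : ℝ → ℝ)
    (hg : ∀ x : ℝ, g x = ∫ ε in Set.Icc a b, fNT ε * ((ε / 2) * Real.exp (-(ε * |x|))))
    (ε₀ : ℝ)
    (hε₀ : ε₀ = Real.log ((m + σ * (gaussPdf α - gaussPdf β) / (gaussCdf β - gaussCdf α)) /
      (∫ ε in Set.Icc a b, ε * Real.exp (-(ε * Δq)) * fNT ε))) :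
    ∀ S : Set ℝ, MeasurableSet S → ∀ a₁ a₂ : ℝ, |a₁ - a₂| ≤ Δq →
      ∫ x in S, g (x - a₁) ≤ Real.exp ε₀ * ∫ x in S, g (x - a₂) := by
  -- basic positivity facts
  have hαβ : α < β := by
    rw [hα, hβ]; exact div_lt_div_of_pos_right (by linarith) hσ
  have hZ : 0 < gaussCdf β - gaussCdf α := sub_pos.2 (gaussCdf_lt hαβ)
  set Z := gaussCdf β - gaussCdf α with hZdef
  -- the weight function F
  set F : ℝ → ℝ := fun ε => fNT ε * ε with hFdef
  have hfNTnn : ∀ ε, 0 ≤ fNT ε := by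
    intro ε; rw [hfNT]; split_ifs with h
    · exact div_nonneg (gaussPdf_pos _).le (by positivity)
    · exact le_rfl
  have hFnn : ∀ ε, 0 ≤ F ε := by
    intro ε
    rcases le_or_gt ε a with h | h
    · rcases eq_or_lt_of_le h with rfl | h
      · exact mul_nonneg (hfNTnn _) ha
      · have : fNT ε = 0 := by
          rw [hfNT, if_neg (fun hc => absurd hc.1 (not_le.2 h))]
        simp [hFdef, this]
    · exact mul_nonneg (hfNTnn _) (by linarith)
  have hfNTeq : ∀ ε ∈ Set.Icc a b, fNT ε = gaussPdf ((ε - m) / σ) / (σ * Z) := by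
    intro ε hε; rw [hfNT, if_pos hε]
  -- the Laplace transform H
  set H : ℝ → ℝ := fun t => ∫ ε in Set.Icc a b, F ε * Real.exp (-(ε * t)) with hHdef
  have hHint : ∀ t : ℝ, IntegrableOn (fun ε => F ε * Real.exp (-(ε * t))) (Set.Icc a b) volume := by
    intro t
    have hc : Continuous (fun ε : ℝ => gaussPdf ((ε - m) / σ) / (σ * Z) * ε * Real.exp (-(ε * t))) := by
      apply Continuous.mul
      · exact ((continuous_gaussPdf.comp (by fun_prop)).div_const _).mul continuous_id
      · exact Real.continuous_exp.comp (by fun_prop)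
    refine (hc.integrableOn_Icc).congr_fun (fun ε hε => ?_) measurableSet_Icc
    simp only [hFdef, hfNTeq ε hε]; try ring
  have hHpos : ∀ t : ℝ, 0 < H t := by
    intro t
    rw [hHdef]
    simp only
    rw [MeasureTheory.integral_Icc_eq_integral_Ioc, ← intervalIntegral.integral_of_le hab.le]
    apply intervalIntegral.intervalIntegral_pos_of_pos_on
    · have := hHint t
      rw [← Set.uIcc_of_le hab.le] at this
      exact this.intervalIntegrable
    · intro ε hε
      have hεI : ε ∈ Set.Icc a b := Set.mem_Icc_of_Ioo hε
      have hε0 : 0 < ε := lt_of_le_of_lt ha hε.1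
      have : 0 < fNT ε := by
        rw [hfNTeq ε hεI]
        exact div_pos (gaussPdf_pos _) (by positivity)
      have : 0 < F ε := mul_pos this hε0
      exact mul_pos this (Real.exp_pos _)
    · exact hab
  have hHmono : ∀ t t' : ℝ, 0 ≤ t → t ≤ t' → H t' ≤ H t := by
    intro t t' ht htt'
    apply MeasureTheory.setIntegral_mono_on (hHint t') (hHint t) measurableSet_Icc
    intro ε hε
    apply mul_le_mul_of_nonneg_left _ (hFnn ε)
    apply Real.exp_le_exp.2
    have : 0 ≤ ε := le_trans ha hε.1
    nlinarith
  -- log-convexity (Chebyshev) step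
  have hkey2 : ∀ t d : ℝ, 0 ≤ t → 0 ≤ d → H t * H d ≤ H 0 * H (t + d) := by
    intro t d ht hd
    set μ := volume.restrict (Set.Icc a b) with hμ
    set u : ℝ → ℝ → ℝ := fun s ε => F ε * Real.exp (-(ε * s)) with hu
    have hui : ∀ s : ℝ, Integrable (u s) μ := fun s => hHint s
    have e1 : H t * H d = ∫ z : ℝ × ℝ, u t z.1 * u d z.2 ∂(μ.prod μ) :=
      (integral_prod_mul (u t) (u d)).symm
    have e2 : H d * H t = ∫ z : ℝ × ℝ, u d z.1 * u t z.2 ∂(μ.prod μ) :=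
      (integral_prod_mul (u d) (u t)).symm
    have e3 : H 0 * H (t + d) = ∫ z : ℝ × ℝ, u 0 z.1 * u (t + d) z.2 ∂(μ.prod μ) :=
      (integral_prod_mul (u 0) (u (t + d))).symm
    have e4 : H (t + d) * H 0 = ∫ z : ℝ × ℝ, u (t + d) z.1 * u 0 z.2 ∂(μ.prod μ) :=
      (integral_prod_mul (u (t + d)) (u 0)).symm
    have hptw : ∀ z : ℝ × ℝ,
        u t z.1 * u d z.2 + u d z.1 * u t z.2 -
          (u 0 z.1 * u (t + d) z.2 + u (t + d) z.1 * u 0 z.2) ≤ 0 := by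
      rintro ⟨x, y⟩
      simp only [hu]
      have hsign : (Real.exp (-(x * t)) - Real.exp (-(y * t))) *
          (Real.exp (-(y * d)) - Real.exp (-(x * d))) ≤ 0 := by
        rcases le_total x y with hxy | hxy
        · apply mul_nonpos_of_nonneg_of_nonpos
          · exact sub_nonneg.2 (Real.exp_le_exp.2 (by nlinarith))
          · exact sub_nonpos.2 (Real.exp_le_exp.2 (by nlinarith))
        · apply mul_nonpos_of_nonpos_of_nonneg
          · exact sub_nonpos.2 (Real.exp_le_exp.2 (by nlinarith))
          · exact sub_nonneg.2 (Real.exp_le_exp.2 (by nlinarith))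
      have hexp : F x * Real.exp (-(x * t)) * (F y * Real.exp (-(y * d))) +
          F x * Real.exp (-(x * d)) * (F y * Real.exp (-(y * t))) -
          (F x * Real.exp (-(x * 0)) * (F y * Real.exp (-(y * (t + d)))) +
            F x * Real.exp (-(x * (t + d))) * (F y * Real.exp (-(y * 0)))) =
          F x * F y * ((Real.exp (-(x * t)) - Real.exp (-(y * t))) *
            (Real.exp (-(y * d)) - Real.exp (-(x * d)))) := by
        rw [show -(x * (t + d)) = -(x * t) + -(x * d) by ring,
          show -(y * (t + d)) = -(y * t) + -(y * d) by ring,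
          Real.exp_add, Real.exp_add]
        simp only [mul_zero, neg_zero, Real.exp_zero]
        ring
      rw [hexp]
      exact mul_nonpos_of_nonneg_of_nonpos (mul_nonneg (hFnn x) (hFnn y)) hsign
    have hint1 := (hui t).mul_prod (hui d)
    have hint2 := (hui d).mul_prod (hui t)
    have hint3 := (hui 0).mul_prod (hui (t + d))
    have hint4 := (hui (t + d)).mul_prod (hui 0)
    have hsum : H t * H d + H d * H t - (H 0 * H (t + d) + H (t + d) * H 0) ≤ 0 := by
      have hint12 : Integrable (fun z : ℝ × ℝ => u t z.1 * u d z.2 + u d z.1 * u t z.2)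
          (μ.prod μ) := hint1.add hint2
      have hint34 : Integrable (fun z : ℝ × ℝ => u 0 z.1 * u (t + d) z.2 +
          u (t + d) z.1 * u 0 z.2) (μ.prod μ) := hint3.add hint4
      have hle := integral_nonpos (μ := μ.prod μ)
        (f := fun z : ℝ × ℝ => u t z.1 * u d z.2 + u d z.1 * u t z.2 -
          (u 0 z.1 * u (t + d) z.2 + u (t + d) z.1 * u 0 z.2)) (fun z => hptw z)
      rw [integral_sub hint12 hint34, integral_add hint1 hint2,
        integral_add hint3 hint4] at hle
      rw [e1, e2, e3, e4]
      linarith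
    linarith
  -- the combined key inequality
  have hkey : ∀ s₁ s₂ : ℝ, 0 ≤ s₁ → 0 ≤ s₂ → |s₁ - s₂| ≤ Δq →
      H s₁ * H Δq ≤ H 0 * H s₂ := by
    intro s₁ s₂ hs₁ hs₂ hd
    rcases abs_le.1 hd with ⟨hd1, hd2⟩
    rcases le_total s₂ Δq with hc | hc
    · exact mul_le_mul (hHmono 0 s₁ le_rfl hs₁) (hHmono s₂ Δq hs₂ hc)
        (hHpos Δq).le (hHpos 0).le
    · calc H s₁ * H Δq ≤ H (s₂ - Δq) * H Δq :=
            mul_le_mul_of_nonneg_right (hHmono (s₂ - Δq) s₁ (by linarith) (by linarith))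
              (hHpos Δq).le
        _ ≤ H 0 * H (s₂ - Δq + Δq) := hkey2 (s₂ - Δq) Δq (by linarith) hΔq.le
        _ = H 0 * H s₂ := by rw [sub_add_cancel]
  -- identification of H 0 with the truncated Gaussian mean
  have hH0 : H 0 = m + σ * (gaussPdf α - gaussPdf β) / Z := by
    set G : ℝ → ℝ := fun u => gaussPdf u * (m + σ * u) / (σ * Z) with hGdef
    have hGeq : ∀ ε : ℝ, gaussPdf ((ε - m) / σ) / (σ * Z) * ε = G (ε / σ - m / σ) := by
      intro ε
      rw [hGdef]
      simp only
      rw [show ε / σ - m / σ = (ε - m) / σ by ring,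
        show m + σ * ((ε - m) / σ) = ε by field_simp; ring]
      ring
    have h1 : H 0 = ∫ ε in Set.Icc a b, gaussPdf ((ε - m) / σ) / (σ * Z) * ε := by
      rw [hHdef]
      apply MeasureTheory.setIntegral_congr_fun measurableSet_Icc
      intro ε hε
      simp only [hFdef, hfNTeq ε hε, mul_zero, neg_zero, Real.exp_zero, mul_one]
    have h2 : H 0 = ∫ ε in a..b, G (ε / σ - m / σ) := by
      rw [h1, MeasureTheory.integral_Icc_eq_integral_Ioc,
        ← intervalIntegral.integral_of_le hab.le]
      exact intervalIntegral.integral_congr fun ε _ => hGeq ε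
    have h3 : (∫ ε in a..b, G (ε / σ - m / σ)) = σ • ∫ u in α..β, G u := by
      have hαa : α = a / σ - m / σ := by rw [hα]; ring
      have hβb : β = b / σ - m / σ := by rw [hβ]; ring
      rw [intervalIntegral.integral_comp_div_sub G hσ.ne' (m / σ), ← hαa, ← hβb]
    have h4 : (∫ u in α..β, G u) = (m * Z + σ * (gaussPdf α - gaussPdf β)) / (σ * Z) := by
      have hGalt : ∀ u : ℝ, G u = (m * gaussPdf u + σ * (u * gaussPdf u)) / (σ * Z) := by
        intro u; rw [hGdef]; ring
      have hc1 : Continuous fun u : ℝ => m * gaussPdf u := continuous_const.mul continuous_gaussPdf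
      have hc2 : Continuous fun u : ℝ => σ * (u * gaussPdf u) :=
        continuous_const.mul (continuous_id.mul continuous_gaussPdf)
      rw [intervalIntegral.integral_congr fun u _ => hGalt u,
        intervalIntegral.integral_div,
        intervalIntegral.integral_add (hc1.intervalIntegrable _ _) (hc2.intervalIntegrable _ _),
        intervalIntegral.integral_const_mul, intervalIntegral.integral_const_mul,
        intervalIntegral_gaussPdf, intervalIntegral_mul_gaussPdf, ← hZdef]
    have h5 : H 0 = σ * ((m * Z + σ * (gaussPdf α - gaussPdf β)) / (σ * Z)) := by
      rw [h2, h3, h4, smul_eq_mul]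
    rw [h5]
    field_simp
  -- identification of the denominator with H Δq
  have hHΔq : (∫ ε in Set.Icc a b, ε * Real.exp (-(ε * Δq)) * fNT ε) = H Δq := by
    rw [hHdef]
    apply integral_congr_ae
    filter_upwards with ε
    simp only [hFdef]
    ring
  have hexp : Real.exp ε₀ = H 0 / H Δq := by
    rw [hε₀, hHΔq, ← hH0]
    exact Real.exp_log (div_pos (hHpos 0) (hHpos Δq))
  -- g in terms of H
  have hgH : ∀ y : ℝ, g y = (1 / 2) * H |y| := by
    intro y
    rw [hg y, hHdef]
    simp only
    rw [← MeasureTheory.integral_const_mul]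
    apply integral_congr_ae
    filter_upwards with ε
    simp only [hFdef]
    ring
  have hgnn : ∀ y : ℝ, 0 ≤ g y := fun y => by
    rw [hgH y]
    have := (hHpos |y|).le
    linarith
  -- measurability of g
  have hfm : Measurable fNT := by
    have : fNT = fun ε => if ε ∈ Set.Icc a b then gaussPdf ((ε - m) / σ) / (σ * Z) else 0 :=
      funext hfNT
    rw [this]
    exact Measurable.ite measurableSet_Icc
      ((continuous_gaussPdf.measurable.comp (by fun_prop)).div_const _) measurable_const
  have hgm : Measurable g := by
    have hsm : StronglyMeasurable
        fun p : ℝ × ℝ => fNT p.2 * (p.2 / 2 * Real.exp (-(p.2 * |p.1|))) := by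
      apply Measurable.stronglyMeasurable
      exact (hfm.comp measurable_snd).mul (by fun_prop)
    have hmi := hsm.integral_prod_right' (ν := volume.restrict (Set.Icc a b))
    have hgeq : g = fun x => ∫ ε in Set.Icc a b, fNT ε * (ε / 2 * Real.exp (-(ε * |x|))) :=
      funext hg
    rw [hgeq]
    exact hmi.measurable
  -- the pointwise inequality
  intro S hS a₁ a₂ hdist
  have hpt : ∀ x c₁ c₂ : ℝ, |c₁ - c₂| ≤ Δq → g (x - c₁) ≤ H 0 / H Δq * g (x - c₂) := by
    intro x c₁ c₂ hc
    rw [hgH, hgH]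
    have habs : |(|x - c₁|) - (|x - c₂|)| ≤ Δq := by
      refine le_trans (abs_abs_sub_abs_le_abs_sub _ _) ?_
      rwa [show x - c₁ - (x - c₂) = -(c₁ - c₂) by ring, abs_neg]
    have hk := hkey (|x - c₁|) (|x - c₂|) (abs_nonneg _) (abs_nonneg _) habs
    have hq := hHpos Δq
    rw [div_mul_eq_mul_div, div_mul_eq_mul_div, le_div_iff₀ hq]
    nlinarith
  -- final assembly
  by_cases hI : IntegrableOn (fun x => g (x - a₂)) S volume
  · calc ∫ x in S, g (x - a₁)
        ≤ ∫ x in S, H 0 / H Δq * g (x - a₂) := by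
          apply integral_mono_of_nonneg
          · exact Filter.Eventually.of_forall fun x => hgnn _
          · exact hI.const_mul _
          · exact Filter.Eventually.of_forall fun x => hpt x a₁ a₂ hdist
      _ = Real.exp ε₀ * ∫ x in S, g (x - a₂) := by
          rw [MeasureTheory.integral_const_mul, hexp]
  · have hI1 : ¬ IntegrableOn (fun x => g (x - a₁)) S volume := by
      intro hI1
      apply hI
      apply Integrable.mono' (hI1.const_mul (H 0 / H Δq))
      · exact ((hgm.comp (measurable_id.sub measurable_const)).stronglyMeasurable).aestronglyMeasurable
      · filter_upwards with x
        rw [Real.norm_eq_abs, abs_of_nonneg (hgnn _)]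
        exact hpt x a₂ a₁ (by rwa [abs_sub_comm])
    rw [MeasureTheory.integral_undef hI1, MeasureTheory.integral_undef hI]
    simp
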